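/- For any square-free monomial g in m variables, the orbit of g under the action of LTA(m,2) (by substitution of variables) equals the orbit of g under the subgroup LTA(m,2)_g, consisting of (A,b) with b_i = 0 for i ∉ ind(g), a_{ij} = 0 whenever i ∉ ind(g) or j ∈ ind(g). -/

import Mathlib

open MvPolynomial

/-- The ring `R_m = F_2[x_0,…,x_{m-1}]/(x_i^2 - x_i)`. -/
def Rring (m : ℕ) : Type :=
  MvPolynomial (Fin m) (ZMod 2) ⧸
    Ideal.span { P : MvPolynomial (Fin m) (ZMod 2) | ∃ i, P = X i ^ 2 - X i }

noncomputable instance (m : ℕ) : CommRing (Rring m) := Ideal.Quotient.commRing _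
noncomputable instance (m : ℕ) : Algebra (ZMod 2) (Rring m) := Ideal.Quotient.algebra _

/-- The class in `R_m` of a polynomial. -/
noncomputable def rmk {m : ℕ} (P : MvPolynomial (Fin m) (ZMod 2)) : Rring m :=
  Ideal.Quotient.mk _ P

/-- `A` is lower unitriangular. -/
def LowerUni {m : ℕ} (A : Matrix (Fin m) (Fin m) (ZMod 2)) : Prop :=
  (∀ i, A i i = 1) ∧ (∀ i j : Fin m, i < j → A i j = 0)

/-- Image of the variable `x_i` under the affine substitution `(A,b)`:
`∑_j a_{ij} x_j + b_i` (which is `x_i + ∑_{j<i} a_{ij} x_j + b_i` when `A` is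
lower unitriangular). -/
noncomputable def subVar {m : ℕ} (A : Matrix (Fin m) (Fin m) (ZMod 2))
    (b : Fin m → ZMod 2) (i : Fin m) : MvPolynomial (Fin m) (ZMod 2) :=
  (∑ j, C (A i j) * X j) + C (b i)

/-- The orbit in `R_m` of the monomial `g` under the action of `LTA(m,2)` by
substitution. -/
noncomputable def orbitLTA {m : ℕ} (g : Finset (Fin m)) : Set (Rring m) :=
  { P | ∃ A b, LowerUni A ∧ P = rmk (∏ i ∈ g, subVar A b i) }

/-- Membership in the subgroup `LTA(m,2)_g`: `b_i = 0` for `i ∉ ind(g)` and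
`a_{ij} = 0` (off the diagonal) whenever `i ∉ ind(g)` or `j ∈ ind(g)`. -/
def stabCond {m : ℕ} (g : Finset (Fin m)) (A : Matrix (Fin m) (Fin m) (ZMod 2))
    (b : Fin m → ZMod 2) : Prop :=
  (∀ i, i ∉ g → b i = 0) ∧
  (∀ i j : Fin m, i ≠ j → (i ∉ g ∨ j ∈ g) → A i j = 0)

section Aux
open MvPolynomial
variable {m : ℕ}

noncomputable abbrev Ig (m : ℕ) : Ideal (MvPolynomial (Fin m) (ZMod 2)) :=
  Ideal.span { P : MvPolynomial (Fin m) (ZMod 2) | ∃ i, P = X i ^ 2 - X i }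

lemma rmk_eq_mk (P : MvPolynomial (Fin m) (ZMod 2)) : rmk P = Ideal.Quotient.mk (Ig m) P := rfl

lemma rmk_add (P Q : MvPolynomial (Fin m) (ZMod 2)) : rmk (P + Q) = rmk P + rmk Q := rfl
lemma rmk_mul (P Q : MvPolynomial (Fin m) (ZMod 2)) : rmk (P * Q) = rmk P * rmk Q := rfl
lemma rmk_one : rmk (1 : MvPolynomial (Fin m) (ZMod 2)) = 1 := rfl

lemma two_eq_zero : (2 : Rring m) = 0 := by
  have h : ((1:MvPolynomial (Fin m) (ZMod 2)) + 1) = 0 := by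
    rw [← C_1, ← map_add]
    norm_num
    rfl
  have : (2 : Rring m) = rmk ((1:MvPolynomial (Fin m) (ZMod 2)) + 1) := by
    rw [rmk_add, rmk_one]; ring
  rw [this, h]; rfl

lemma addSq2 (x y : Rring m) : (x + y) * (x + y) = x * x + y * y := by
  have h := two_eq_zero (m := m)
  linear_combination x * y * h

lemma sq_sum {ι : Type*} (s : Finset ι) (f : ι → Rring m) :
    (∑ i ∈ s, f i) * (∑ i ∈ s, f i) = ∑ i ∈ s, f i * f i := by
  induction s using Finset.cons_induction with
  | empty => simp
  | cons a s ha ih => rw [Finset.sum_cons, Finset.sum_cons, addSq2, ih]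

lemma rmk_CX_idem (a : ZMod 2) (j : Fin m) :
    rmk (C a * X j) * rmk (C a * X j) = rmk (C a * X j) := by
  rw [← rmk_mul]
  have h1 : (C a * X j) * (C a * X j) = C (a * a) * (X j ^ 2) := by
    rw [map_mul]; ring
  have h2 : ∀ c : ZMod 2, c * c = c := by decide
  rw [h1, h2 a]
  rw [rmk_eq_mk, rmk_eq_mk]
  show Ideal.Quotient.mk (Ig m) (C a * X j ^ 2) = Ideal.Quotient.mk (Ig m) (C a * X j)
  rw [Ideal.Quotient.eq]
  have : C a * X j ^ 2 - C a * X j = C a * (X j ^ 2 - X j) := by ring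
  rw [this]
  exact Ideal.mul_mem_left _ _ (Ideal.subset_span ⟨j, rfl⟩)

lemma subVar_idem (A : Matrix (Fin m) (Fin m) (ZMod 2)) (b : Fin m → ZMod 2) (i : Fin m) :
    rmk (subVar A b i) * rmk (subVar A b i) = rmk (subVar A b i) := by
  unfold subVar
  rw [rmk_add]
  have hs : rmk (∑ j, C (A i j) * X j) = ∑ j, rmk (C (A i j) * X j) := map_sum _ _ _
  rw [hs, addSq2, sq_sum]
  congr 1
  · exact Finset.sum_congr rfl fun j _ => rmk_CX_idem _ _
  · rw [← rmk_mul, ← map_mul]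
    have : b i * b i = b i := by have := (by decide : ∀ c : ZMod 2, c * c = c); exact this _
    rw [this]

end Aux
section Aux2
open MvPolynomial
variable {m : ℕ}

lemma idem_mul (u v : Rring m) (hu : u * u = u) : u * (v + u + 1) = u * v := by
  have h := two_eq_zero (m := m)
  linear_combination hu + u * h

lemma subVar_update_self (A : Matrix (Fin m) (Fin m) (ZMod 2)) (b : Fin m → ZMod 2)
    (i j : Fin m) :
    subVar (Matrix.updateRow A i (A i + A j)) (Function.update b i (b i + b j + 1)) i
      = subVar A b i + subVar A b j + 1 := by
  unfold subVar
  rw [Matrix.updateRow_self, Function.update_self]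
  rw [show (C (b i + b j + 1) : MvPolynomial (Fin m) (ZMod 2)) = C (b i) + C (b j) + 1 by
    rw [map_add, map_add, C_1]]
  rw [show (∑ k, (C ((A i + A j) k) * X k) : MvPolynomial (Fin m) (ZMod 2))
      = (∑ k, C (A i k) * X k) + (∑ k, C (A j k) * X k) by
    rw [← Finset.sum_add_distrib]
    exact Finset.sum_congr rfl fun k _ => by rw [Pi.add_apply, map_add]; ring]
  ring

lemma subVar_update_ne (A : Matrix (Fin m) (Fin m) (ZMod 2)) (b : Fin m → ZMod 2)
    (i j k : Fin m) (hk : k ≠ i) :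
    subVar (Matrix.updateRow A i (A i + A j)) (Function.update b i (b i + b j + 1)) k
      = subVar A b k := by
  unfold subVar
  rw [Function.update_of_ne hk]
  congr 1
  exact Finset.sum_congr rfl fun l _ => by rw [Matrix.updateRow_ne hk]

lemma step_prod (g : Finset (Fin m)) (A : Matrix (Fin m) (Fin m) (ZMod 2))
    (b : Fin m → ZMod 2) (i j : Fin m) (hi : i ∈ g) (hj : j ∈ g) (hne : j ≠ i) :
    rmk (∏ k ∈ g, subVar (Matrix.updateRow A i (A i + A j))
        (Function.update b i (b i + b j + 1)) k)
      = rmk (∏ k ∈ g, subVar A b k) := by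
  set A₁ := Matrix.updateRow A i (A i + A j)
  set b₁ := Function.update b i (b i + b j + 1)
  have hmk : ∀ P : MvPolynomial (Fin m) (ZMod 2), rmk P = Ideal.Quotient.mk _ P := fun _ => rfl
  have hprod : ∀ (A' : Matrix (Fin m) (Fin m) (ZMod 2)) (b' : Fin m → ZMod 2),
      rmk (∏ k ∈ g, subVar A' b' k) = ∏ k ∈ g, rmk (subVar A' b' k) := by
    intro A' b'; rw [hmk]; exact map_prod _ _ _
  rw [hprod, hprod]
  have hjmem : j ∈ g.erase i := Finset.mem_erase.2 ⟨hne, hj⟩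
  rw [← Finset.mul_prod_erase _ _ hi, ← Finset.mul_prod_erase _ _ hi,
    ← Finset.mul_prod_erase _ _ hjmem, ← Finset.mul_prod_erase _ _ hjmem]
  have hrest : ∏ k ∈ (g.erase i).erase j, rmk (subVar A₁ b₁ k)
      = ∏ k ∈ (g.erase i).erase j, rmk (subVar A b k) := by
    refine Finset.prod_congr rfl fun k hk => ?_
    have : k ≠ i := (Finset.mem_erase.1 (Finset.mem_erase.1 hk).2).1
    rw [subVar_update_ne A b i j k this]
  have hji : rmk (subVar A₁ b₁ j) = rmk (subVar A b j) := by
    rw [subVar_update_ne A b i j j hne]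
  have hii : rmk (subVar A₁ b₁ i)
      = rmk (subVar A b i) + rmk (subVar A b j) + 1 := by
    rw [subVar_update_self A b i j, rmk_add, rmk_add, rmk_one]
  rw [hrest, hji, hii]
  have key : rmk (subVar A b j) * (rmk (subVar A b i) + rmk (subVar A b j) + 1)
      = rmk (subVar A b j) * rmk (subVar A b i) :=
    idem_mul _ _ (subVar_idem A b j)
  set P := ∏ k ∈ (g.erase i).erase j, rmk (subVar A b k)
  linear_combination P * key

end Aux2
section Aux3
open MvPolynomial
variable {m : ℕ}

lemma lowerUni_update (A : Matrix (Fin m) (Fin m) (ZMod 2)) (hA : LowerUni A)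
    (i j : Fin m) (hji : j < i) :
    LowerUni (Matrix.updateRow A i (A i + A j)) := by
  constructor
  · intro k
    by_cases hk : k = i
    · subst hk
      rw [Matrix.updateRow_self, Pi.add_apply, hA.1, hA.2 j k hji]
      ring
    · rw [Matrix.updateRow_ne hk]; exact hA.1 k
  · intro k l hkl
    by_cases hk : k = i
    · subst hk
      rw [Matrix.updateRow_self, Pi.add_apply, hA.2 k l hkl, hA.2 j l (hji.trans hkl)]
      ring
    · rw [Matrix.updateRow_ne hk]; exact hA.2 k l hkl

/-- weighted count of bad entries within row `i` -/
def rowMu (g : Finset (Fin m)) (A : Matrix (Fin m) (Fin m) (ZMod 2)) (i : Fin m) : ℕ :=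
  ∑ k ∈ g, if i ≠ k ∧ A i k = 1 then 2 ^ (k : ℕ) else 0

def mu (g : Finset (Fin m)) (A : Matrix (Fin m) (Fin m) (ZMod 2)) : ℕ :=
  ∑ i ∈ g, rowMu g A i

lemma sum_range_two_pow (n : ℕ) : ∑ k ∈ Finset.range n, 2 ^ k < 2 ^ n := by
  induction n with
  | zero => simp
  | succ n ih =>
    rw [Finset.sum_range_succ, pow_succ]
    omega

lemma mu_decrease (g : Finset (Fin m)) (A : Matrix (Fin m) (Fin m) (ZMod 2))
    (hA : LowerUni A) (i j : Fin m) (hi : i ∈ g) (hj : j ∈ g) (hji : j < i)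
    (hAij : A i j = 1) :
    mu g (Matrix.updateRow A i (A i + A j)) < mu g A := by
  set A₁ := Matrix.updateRow A i (A i + A j) with hA₁def
  have hne : j ≠ i := ne_of_lt hji
  have hij : i ≠ j := hne.symm
  -- rows other than i unchanged
  have hrow : ∀ k ∈ g.erase i, rowMu g A₁ k = rowMu g A k := by
    intro k hk
    have hki : k ≠ i := (Finset.mem_erase.1 hk).1
    unfold rowMu
    refine Finset.sum_congr rfl fun l _ => ?_
    rw [hA₁def, Matrix.updateRow_ne hki]
  have hmu : ∀ B : Matrix (Fin m) (Fin m) (ZMod 2),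
      mu g B = rowMu g B i + ∑ k ∈ g.erase i, rowMu g B k := by
    intro B; rw [mu, ← Finset.add_sum_erase _ _ hi]
  -- key: rowMu for row i strictly decreases
  have hA1ij : A₁ i j = 0 := by
    rw [hA₁def, Matrix.updateRow_self, Pi.add_apply, hAij, hA.1 j]
    decide
  have hsplit1 : rowMu g A₁ i
      = ∑ k ∈ g.erase j, (if i ≠ k ∧ A₁ i k = 1 then 2 ^ (k : ℕ) else 0) := by
    rw [rowMu, ← Finset.add_sum_erase _ _ hj, hA1ij]
    simp
  have hsplit2 : rowMu g A i
      = 2 ^ (j : ℕ) + ∑ k ∈ g.erase j, (if i ≠ k ∧ A i k = 1 then 2 ^ (k : ℕ) else 0) := by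
    rw [rowMu, ← Finset.add_sum_erase _ _ hj, if_pos ⟨hij, hAij⟩]
  have hterm : ∀ k ∈ g.erase j,
      (if i ≠ k ∧ A₁ i k = 1 then 2 ^ (k : ℕ) else 0)
        ≤ (if i ≠ k ∧ A i k = 1 then 2 ^ (k : ℕ) else 0)
          + (if k < j then 2 ^ (k : ℕ) else 0) := by
    intro k hk
    have hkj : k ≠ j := (Finset.mem_erase.1 hk).1
    rcases lt_or_gt_of_ne hkj with h | h
    · rw [if_pos h]
      split_ifs <;> first | exact Nat.le_add_left _ _ | exact Nat.zero_le _
    · have hsame : A₁ i k = A i k := by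
        rw [hA₁def, Matrix.updateRow_self, Pi.add_apply, hA.2 j k h]
        ring
      rw [hsame, if_neg (not_lt_of_gt h)]
      simp
  have hW : ∑ k ∈ g.erase j, (if k < j then 2 ^ (k : ℕ) else 0) < 2 ^ (j : ℕ) := by
    calc ∑ k ∈ g.erase j, (if k < j then 2 ^ (k : ℕ) else 0)
        = ∑ k ∈ (g.erase j).filter (· < j), 2 ^ (k : ℕ) := (Finset.sum_filter _ _).symm
      _ = ∑ n ∈ ((g.erase j).filter (· < j)).image Fin.val, 2 ^ n := by
          rw [Finset.sum_image]
          intro x _ y _ h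
          exact Fin.val_injective h
      _ ≤ ∑ n ∈ Finset.range (j : ℕ), 2 ^ n := by
          refine Finset.sum_le_sum_of_subset ?_
          intro n hn
          rcases Finset.mem_image.1 hn with ⟨k, hk, rfl⟩
          exact Finset.mem_range.2 ((Finset.mem_filter.1 hk).2)
      _ < 2 ^ (j : ℕ) := sum_range_two_pow _
  have hle : rowMu g A₁ i
      ≤ (∑ k ∈ g.erase j, (if i ≠ k ∧ A i k = 1 then 2 ^ (k : ℕ) else 0))
        + ∑ k ∈ g.erase j, (if k < j then 2 ^ (k : ℕ) else 0) := by
    rw [hsplit1, ← Finset.sum_add_distrib]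
    exact Finset.sum_le_sum hterm
  have hlt : rowMu g A₁ i < rowMu g A i := by
    rw [hsplit2]; omega
  have hsum : ∑ k ∈ g.erase i, rowMu g A₁ k = ∑ k ∈ g.erase i, rowMu g A k :=
    Finset.sum_congr rfl hrow
  rw [hmu A₁, hmu A, hsum]
  exact Nat.add_lt_add_right hlt _

lemma zmod2_ne_zero (c : ZMod 2) (h : c ≠ 0) : c = 1 := by revert h; revert c; decide

lemma core (g : Finset (Fin m)) : ∀ (n : ℕ) (A : Matrix (Fin m) (Fin m) (ZMod 2))
    (b : Fin m → ZMod 2), LowerUni A → mu g A ≤ n →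
    ∃ A' b', LowerUni A' ∧ (∀ i ∈ g, ∀ j ∈ g, i ≠ j → A' i j = 0) ∧
      rmk (∏ i ∈ g, subVar A' b' i) = rmk (∏ i ∈ g, subVar A b i) := by
  intro n
  induction n with
  | zero =>
    intro A b hA hmu
    refine ⟨A, b, hA, fun i hi j hj hij => ?_, rfl⟩
    by_contra hne0
    have h1 : A i j = 1 := zmod2_ne_zero _ hne0
    have h2 : 2 ^ (j : ℕ) ≤ rowMu g A i := by
      rw [rowMu, ← Finset.add_sum_erase _ _ hj, if_pos ⟨hij, h1⟩]
      exact Nat.le_add_right _ _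
    have h3 : rowMu g A i ≤ mu g A := by
      unfold mu
      exact Finset.single_le_sum (fun k _ => Nat.zero_le _) hi
    have h4 : 0 < 2 ^ (j : ℕ) := Nat.pow_pos (by norm_num)
    omega
  | succ n ih =>
    intro A b hA hmu
    by_cases hbad : ∃ i ∈ g, ∃ j ∈ g, i ≠ j ∧ A i j = 1
    · obtain ⟨i, hi, j, hj, hij, hA1⟩ := hbad
      have hji : j < i := by
        rcases lt_trichotomy j i with h | h | h
        · exact h
        · exact absurd h.symm hij
        · exfalso; rw [hA.2 i j h] at hA1; exact absurd hA1 (by decide)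
      have hdec := mu_decrease g A hA i j hi hj hji hA1
      obtain ⟨A', b', h1, h2, h3⟩ := ih (Matrix.updateRow A i (A i + A j))
        (Function.update b i (b i + b j + 1)) (lowerUni_update A hA i j hji) (by omega)
      exact ⟨A', b', h1, h2, h3.trans (step_prod g A b i j hi hj (ne_of_lt hji))⟩
    · push_neg at hbad
      refine ⟨A, b, hA, fun i hi j hj hij => ?_, rfl⟩
      by_contra hne0
      exact absurd (zmod2_ne_zero _ hne0) (fun h => (hbad i hi j hj hij) h)

end Aux3

/-- the orbit of a monomial `g` under `LTA(m,2)` equals its orbit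
under the subgroup `LTA(m,2)_g`. -/
theorem orbit_eq_orbit_stab {m : ℕ} (g : Finset (Fin m)) :
    orbitLTA g =
      { P | ∃ A b, LowerUni A ∧ stabCond g A b ∧ P = rmk (∏ i ∈ g, subVar A b i) } := by
  ext P
  constructor
  · rintro ⟨A, b, hA, rfl⟩
    obtain ⟨A', b', hA', hzero, hprod⟩ := core g (mu g A) A b hA le_rfl
    classical
    set A'' : Matrix (Fin m) (Fin m) (ZMod 2) :=
      fun i j => if i ∈ g then A' i j else (if i = j then 1 else 0) with hA''def
    set b'' : Fin m → ZMod 2 := fun i => if i ∈ g then b' i else 0 with hb''def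
    refine ⟨A'', b'', ?_, ?_, ?_⟩
    · constructor
      · intro i
        by_cases hi : i ∈ g
        · simp only [hA''def, if_pos hi]; exact hA'.1 i
        · simp [hA''def, hi]
      · intro i j hij
        by_cases hi : i ∈ g
        · simp only [hA''def, if_pos hi]; exact hA'.2 i j hij
        · simp only [hA''def, if_neg hi, if_neg (ne_of_lt hij)]
    · constructor
      · intro i hi
        simp only [hb''def, if_neg hi]
      · intro i j hij hcond
        by_cases hi : i ∈ g
        · rcases hcond with h | h
          · exact absurd hi h
          · simp only [hA''def, if_pos hi]; exact hzero i hi j h hij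
        · simp only [hA''def, if_neg hi, if_neg hij]
    · rw [← hprod]
      refine congrArg rmk ?_
      refine Finset.prod_congr rfl fun i hi => ?_
      unfold subVar
      simp only [hA''def, hb''def, if_pos hi]
  · rintro ⟨A, b, hA, _, rfl⟩
    exact ⟨A, b, hA, rfl⟩
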